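/- Let A, B ∈ ℝ^{n×n}, b ∈ ℝⁿ, θ ∈ [0,1), and let Ω ∈ ℝ^{n×n} be such that Ω + A is invertible. Suppose F(x*) = 0 and ‖(Ω+A)^{-1}‖ < 1/[‖B‖ + ‖Ω‖ + θ(‖Ω+A‖ + ‖B‖ + ‖Ω‖)]. Then any sequence {x^k} in ℝⁿ satisfying the inexact modified Newton condition ‖(Ω+A)x^{k+1} − [Ω x^k + B|x^k| + b]‖ ≤ θ‖F(x^k)‖ for all k ≥ 0 converges linearly to x* from any starting point x^0. -/

import Mathlib

open Matrix Filter

/-- Componentwise absolute value of a vector in Euclidean space. -/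
noncomputable def vabs {n : ℕ} (x : EuclideanSpace ℝ (Fin n)) : EuclideanSpace ℝ (Fin n) :=
  WithLp.toLp 2 (fun i => |x i|)

/-- A matrix acting on Euclidean space (so that vector norms are the Euclidean 2-norm). -/
noncomputable def mulV {n : ℕ} (M : Matrix (Fin n) (Fin n) ℝ) (x : EuclideanSpace ℝ (Fin n)) :
    EuclideanSpace ℝ (Fin n) :=
  Matrix.toEuclideanCLM (𝕜 := ℝ) M x

/-- Spectral norm of a real matrix: the operator norm induced by the Euclidean vector norm. -/
noncomputable def spec {n : ℕ} (M : Matrix (Fin n) (Fin n) ℝ) : ℝ :=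
  ‖Matrix.toEuclideanCLM (𝕜 := ℝ) M‖

/-- The GAVE residual function `F(x) = A x − B |x| − b`. -/
noncomputable def gaveF {n : ℕ} (A B : Matrix (Fin n) (Fin n) ℝ)
    (b : EuclideanSpace ℝ (Fin n)) (x : EuclideanSpace ℝ (Fin n)) : EuclideanSpace ℝ (Fin n) :=
  mulV A x - mulV B (vabs x) - b

/-- The AVE residual function `A x − |x| − b` (the GAVE with `B = I`). -/
noncomputable def aveF {n : ℕ} (A : Matrix (Fin n) (Fin n) ℝ)
    (b : EuclideanSpace ℝ (Fin n)) (x : EuclideanSpace ℝ (Fin n)) : EuclideanSpace ℝ (Fin n) :=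
  mulV A x - vabs x - b

/-- A sequence converges linearly to `xs`: the distances to `xs` contract by a fixed
factor `c < 1` at every step, and the sequence tends to `xs`. -/
def ConvergesLinearlyTo {n : ℕ} (x : ℕ → EuclideanSpace ℝ (Fin n))
    (xs : EuclideanSpace ℝ (Fin n)) : Prop :=
  (∃ c : ℝ, 0 ≤ c ∧ c < 1 ∧ ∀ k : ℕ, ‖x (k + 1) - xs‖ ≤ c * ‖x k - xs‖) ∧
    Tendsto x atTop (nhds xs)

lemma vabs_lip {n : ℕ} (u v : EuclideanSpace ℝ (Fin n)) : ‖vabs u - vabs v‖ ≤ ‖u - v‖ := by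
  rw [EuclideanSpace.norm_eq, EuclideanSpace.norm_eq]
  apply Real.sqrt_le_sqrt
  apply Finset.sum_le_sum
  intro i _
  have h1 : (vabs u - vabs v) i = |u i| - |v i| := rfl
  have h2 : (u - v) i = u i - v i := rfl
  rw [h1, h2]
  rw [Real.norm_eq_abs, Real.norm_eq_abs]
  exact pow_le_pow_left₀ (abs_nonneg _) (abs_abs_sub_abs_le_abs_sub _ _) 2

lemma mulV_norm_le {n : ℕ} (M : Matrix (Fin n) (Fin n) ℝ) (u : EuclideanSpace ℝ (Fin n)) :
    ‖mulV M u‖ ≤ spec M * ‖u‖ :=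
  (Matrix.toEuclideanCLM (𝕜 := ℝ) M).le_opNorm u

lemma mulV_sub {n : ℕ} (M : Matrix (Fin n) (Fin n) ℝ) (u v : EuclideanSpace ℝ (Fin n)) :
    mulV M (u - v) = mulV M u - mulV M v := map_sub _ u v

lemma mulV_add_mat {n : ℕ} (M N : Matrix (Fin n) (Fin n) ℝ) (u : EuclideanSpace ℝ (Fin n)) :
    mulV (M + N) u = mulV M u + mulV N u := by
  simp [mulV, map_add]

lemma mulV_inv_cancel {n : ℕ} {M : Matrix (Fin n) (Fin n) ℝ} (h : IsUnit M)
    (u : EuclideanSpace ℝ (Fin n)) : mulV M⁻¹ (mulV M u) = u := by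
  have h1 : M⁻¹ * M = 1 := Matrix.nonsing_inv_mul _ ((Matrix.isUnit_iff_isUnit_det _).mp h)
  have : mulV M⁻¹ (mulV M u) = mulV (M⁻¹ * M) u := by
    simp [mulV, _root_.map_mul, ContinuousLinearMap.mul_apply]
  rw [this, h1]
  simp [mulV, _root_.map_one]

theorem stmt4 {n : ℕ} (A B Ω : Matrix (Fin n) (Fin n) ℝ)
    (b : EuclideanSpace ℝ (Fin n)) (θ : ℝ) (hθ0 : 0 ≤ θ) (hθ1 : θ < 1)
    (hinv : IsUnit (Ω + A))
    (xs : EuclideanSpace ℝ (Fin n)) (hxs : gaveF A B b xs = 0)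
    (hcond : spec (Ω + A)⁻¹ <
      1 / (spec B + spec Ω + θ * (spec (Ω + A) + spec B + spec Ω)))
    (x : ℕ → EuclideanSpace ℝ (Fin n))
    (hx : ∀ k : ℕ, ‖mulV (Ω + A) (x (k + 1)) - (mulV Ω (x k) + mulV B (vabs (x k)) + b)‖ ≤
      θ * ‖gaveF A B b (x k)‖) :
    ConvergesLinearlyTo x xs := by
  set D : ℝ := spec B + spec Ω + θ * (spec (Ω + A) + spec B + spec Ω) with hD
  have hspec_nonneg : ∀ M : Matrix (Fin n) (Fin n) ℝ, 0 ≤ spec M := fun M => norm_nonneg _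
  have hDnn : 0 ≤ D := by
    have := hspec_nonneg B; have := hspec_nonneg Ω; have := hspec_nonneg (Ω + A)
    nlinarith
  have hDpos : 0 < D := by
    rcases hDnn.lt_or_eq with h | h
    · exact h
    · exfalso
      rw [← h] at hcond
      simp at hcond
      exact absurd hcond (not_lt.mpr (hspec_nonneg _))
  set c : ℝ := spec (Ω + A)⁻¹ * D with hc
  have hcnn : 0 ≤ c := mul_nonneg (hspec_nonneg _) hDnn
  have hclt : c < 1 := by
    rw [hc]
    calc spec (Ω + A)⁻¹ * D < (1 / D) * D := by
          exact mul_lt_mul_of_pos_right hcond hDpos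
      _ = 1 := by field_simp
  -- fixed point equation
  have hfix : mulV (Ω + A) xs = mulV Ω xs + mulV B (vabs xs) + b := by
    have h0 : mulV A xs - mulV B (vabs xs) - b = 0 := hxs
    have h1 : mulV A xs = mulV B (vabs xs) + b := by
      have := sub_eq_zero.mp (by rw [sub_sub] at h0; exact h0)
      exact this
    rw [mulV_add_mat, h1]
    abel
  -- F expressed via the error
  have hF : ∀ k, gaveF A B b (x k) =
      mulV A (x k - xs) - mulV B (vabs (x k) - vabs xs) := by
    intro k
    have h0 : mulV A xs - mulV B (vabs xs) - b = 0 := hxs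
    rw [mulV_sub, mulV_sub]
    unfold gaveF
    rw [← sub_eq_zero]
    have hid : mulV A (x k) - mulV B (vabs (x k)) - b -
          (mulV A (x k) - mulV A xs - (mulV B (vabs (x k)) - mulV B (vabs xs)))
        = mulV A xs - mulV B (vabs xs) - b := by abel
    rw [hid, h0]
  have hspecA : spec A ≤ spec (Ω + A) + spec Ω := by
    have : Matrix.toEuclideanCLM (𝕜 := ℝ) A =
        Matrix.toEuclideanCLM (𝕜 := ℝ) (Ω + A) - Matrix.toEuclideanCLM (𝕜 := ℝ) Ω := by
      rw [← map_sub]; congr 1; abel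
    calc spec A = ‖Matrix.toEuclideanCLM (𝕜 := ℝ) (Ω + A) -
          Matrix.toEuclideanCLM (𝕜 := ℝ) Ω‖ := by rw [spec, this]
      _ ≤ spec (Ω + A) + spec Ω := norm_sub_le _ _
  have hFbound : ∀ k, ‖gaveF A B b (x k)‖ ≤
      (spec (Ω + A) + spec B + spec Ω) * ‖x k - xs‖ := by
    intro k
    rw [hF k]
    calc ‖mulV A (x k - xs) - mulV B (vabs (x k) - vabs xs)‖
        ≤ ‖mulV A (x k - xs)‖ + ‖mulV B (vabs (x k) - vabs xs)‖ := norm_sub_le _ _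
      _ ≤ spec A * ‖x k - xs‖ + spec B * ‖vabs (x k) - vabs xs‖ := by
          gcongr <;> exact mulV_norm_le _ _
      _ ≤ (spec (Ω + A) + spec Ω) * ‖x k - xs‖ + spec B * ‖x k - xs‖ := by
          gcongr <;> first
            | exact hspec_nonneg _ | exact hspecA | exact vabs_lip _ _ | positivity
      _ = (spec (Ω + A) + spec B + spec Ω) * ‖x k - xs‖ := by ring
  -- main contraction step
  have hstep : ∀ k, ‖x (k + 1) - xs‖ ≤ c * ‖x k - xs‖ := by
    intro k
    have hsplit : mulV (Ω + A) (x (k + 1) - xs) =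
        (mulV (Ω + A) (x (k + 1)) - (mulV Ω (x k) + mulV B (vabs (x k)) + b)) +
          mulV Ω (x k - xs) + mulV B (vabs (x k) - vabs xs) := by
      rw [mulV_sub, mulV_sub, mulV_sub, hfix]
      abel
    have h1 : ‖x (k + 1) - xs‖ ≤ spec (Ω + A)⁻¹ * ‖mulV (Ω + A) (x (k + 1) - xs)‖ := by
      conv_lhs => rw [← mulV_inv_cancel hinv (x (k + 1) - xs)]
      exact mulV_norm_le _ _
    have h2 : ‖mulV (Ω + A) (x (k + 1) - xs)‖ ≤ D * ‖x k - xs‖ := by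
      rw [hsplit]
      calc ‖_ + mulV Ω (x k - xs) + mulV B (vabs (x k) - vabs xs)‖
          ≤ ‖mulV (Ω + A) (x (k + 1)) - (mulV Ω (x k) + mulV B (vabs (x k)) + b)‖ +
              ‖mulV Ω (x k - xs)‖ + ‖mulV B (vabs (x k) - vabs xs)‖ := by
            exact norm_add₃_le
        _ ≤ θ * ‖gaveF A B b (x k)‖ + spec Ω * ‖x k - xs‖ + spec B * ‖x k - xs‖ := by
            gcongr
            · exact hx k
            · exact mulV_norm_le _ _
            · exact le_trans (mulV_norm_le _ _) (by gcongr; exacts [hspec_nonneg _, vabs_lip _ _])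
        _ ≤ θ * ((spec (Ω + A) + spec B + spec Ω) * ‖x k - xs‖) +
              spec Ω * ‖x k - xs‖ + spec B * ‖x k - xs‖ := by
            gcongr; exact hFbound k
        _ = D * ‖x k - xs‖ := by rw [hD]; ring
    calc ‖x (k + 1) - xs‖ ≤ spec (Ω + A)⁻¹ * ‖mulV (Ω + A) (x (k + 1) - xs)‖ := h1
      _ ≤ spec (Ω + A)⁻¹ * (D * ‖x k - xs‖) := by gcongr; exact hspec_nonneg _
      _ = c * ‖x k - xs‖ := by rw [hc]; ring
  refine ⟨⟨c, hcnn, hclt, hstep⟩, ?_⟩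
  -- convergence
  have hbound : ∀ k, ‖x k - xs‖ ≤ c ^ k * ‖x 0 - xs‖ := by
    intro k
    induction k with
    | zero => simp
    | succ m ih =>
      calc ‖x (m + 1) - xs‖ ≤ c * ‖x m - xs‖ := hstep m
        _ ≤ c * (c ^ m * ‖x 0 - xs‖) := by gcongr
        _ = c ^ (m + 1) * ‖x 0 - xs‖ := by ring
  rw [tendsto_iff_norm_sub_tendsto_zero]
  apply squeeze_zero (fun k => norm_nonneg _) hbound
  have : Tendsto (fun k : ℕ => c ^ k) atTop (nhds 0) :=
    tendsto_pow_atTop_nhds_zero_of_lt_one hcnn hclt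
  simpa using this.mul_const ‖x 0 - xs‖
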